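/- Let G be a 3-uniform hypergraph on n vertices such that every vertex lies in at least (1/2 + 1/t)·C(n,2) edges, where t ≥ 2 and n > t²/2. Then G contains a member of R*_{≤t}: there exist pairs {u_0,v_0}, ..., {u_{s-1},v_{s-1}} of vertices (2 ≤ s ≤ t, pairs pairwise distinct) such that {u_i, v_i, u_{i+1}} and {u_i, v_i, v_{i+1}} are edges for all i mod s. -/

import Mathlib

open Finset Function

set_option linter.unusedSectionVars false

section Digraph2
variable {P : Type*} [Fintype P] [DecidableEq P]

def RWalk' (R : P → P → Prop) : ℕ → P → P → Prop
  | 0, u, v => u = v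
  | (j+1), u, v => ∃ w, R u w ∧ RWalk' R j w v

noncomputable def inNbrs (R : P → P → Prop) (v : P) : Finset P :=
  {u | R u v}.toFinite.toFinset

noncomputable def dball (R : P → P → Prop) (i : ℕ) (v : P) : Finset P :=
  {u | ∃ j ≤ i, RWalk' R j u v}.toFinite.toFinset

lemma mem_inNbrs {R : P → P → Prop} {u v : P} : u ∈ inNbrs R v ↔ R u v := by
  simp [inNbrs]

lemma mem_dball {R : P → P → Prop} {i : ℕ} {u v : P} :
    u ∈ dball R i v ↔ ∃ j ≤ i, RWalk' R j u v := by
  simp [dball]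

lemma self_mem_dball {R : P → P → Prop} {i : ℕ} {v : P} : v ∈ dball R i v :=
  mem_dball.mpr ⟨0, Nat.zero_le _, rfl⟩

theorem digraph_short_cycle (R : P → P → Prop) (hirr : ∀ p, ¬ R p p)
    (k' r : ℕ) (hr1 : 1 ≤ r)
    (hindeg : ∀ v, k' + 1 ≤ (inNbrs R v).card)
    (hNpos : 0 < Fintype.card P)
    (hbig : Fintype.card P ≤ (r + 1) * k' + 2)
    (hgirth : ∀ m, 1 ≤ m → m ≤ 2 * r → ∀ x : P, ¬ RWalk' R m x x) : False := by
  classical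
  obtain ⟨r', rfl⟩ : ∃ r', r = r' + 1 := ⟨r - 1, by omega⟩
  have rwalk_trans : ∀ {j j' : ℕ} {u v x : P},
      RWalk' R j u v → RWalk' R j' v x → RWalk' R (j + j') u x := by
    intro j
    induction j with
    | zero => intro j' u v x h h'; cases h; simpa using h'
    | succ j ih =>
      intro j' u v x h h'
      obtain ⟨w, hw, hwalk⟩ := h
      rw [show (j + 1 + j') = (j + j') + 1 by omega]
      exact ⟨w, hw, ih hwalk h'⟩
  have hanti : ∀ i, i ≤ r' + 1 → ∀ a b : P, a ≠ b →
      a ∈ dball R i b → b ∈ dball R i a → False := by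
    intro i hi a b hne ha hb
    obtain ⟨j, hj, hwj⟩ := mem_dball.mp ha
    obtain ⟨j', hj', hwj'⟩ := mem_dball.mp hb
    have hj1 : 1 ≤ j := by
      rcases Nat.eq_zero_or_pos j with h | h
      · subst h; cases hwj; exact absurd rfl hne
      · exact h
    exact hgirth (j + j') (by omega) (by omega) a (rwalk_trans hwj hwj')
  -- growth of balls
  have hgrow : ∀ j : ℕ, j + 1 ≤ r' + 1 → ∀ v : P,
      2 * (k' + 2) + j * k' ≤ 2 * (dball R (j+1) v).card := by
    intro j
    induction j with
    | zero =>
      intro _ v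
      show 2 * (k' + 2) + 0 * k' ≤ 2 * (dball R 1 v).card
      have hsub : insert v (inNbrs R v) ⊆ dball R 1 v := by
        intro u hu
        rcases Finset.mem_insert.mp hu with h | h
        · subst h; exact self_mem_dball
        · exact mem_dball.mpr ⟨1, le_rfl, v, mem_inNbrs.mp h, rfl⟩
      have hv : v ∉ inNbrs R v := fun h => hirr v (mem_inNbrs.mp h)
      have := Finset.card_le_card hsub
      rw [Finset.card_insert_of_notMem hv] at this
      have := hindeg v
      omega
    | succ j ih =>
      intro hjr v
      show 2 * (k' + 2) + (j + 1) * k' ≤ 2 * (dball R (j + 2) v).card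
      set A := inNbrs R v with hA
      have hAne : A.Nonempty := Finset.card_pos.mp (by rw [hA]; have := hindeg v; omega)
      set S := A.offDiag.filter (fun p => p.2 ∈ dball R (j+1) p.1) with hS
      have hSmem : ∀ p : P × P, p ∈ S ↔
          (p.1 ∈ A ∧ p.2 ∈ A ∧ p.1 ≠ p.2) ∧ p.2 ∈ dball R (j+1) p.1 := by
        intro p; rw [hS, Finset.mem_filter, Finset.mem_offDiag]
      -- 2 * S.card ≤ A.card * A.card - A.card
      have hSswap : ∀ p : P × P, p ∈ S → p.swap ∉ S := by
        intro p hp hps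
        obtain ⟨⟨h1, h2, h3⟩, h4⟩ := hSmem p |>.mp hp
        obtain ⟨_, h4'⟩ := hSmem p.swap |>.mp hps
        exact hanti (j+1) (by omega) p.2 p.1 (Ne.symm h3) h4 h4'
      have hdisj : Disjoint S (S.image Prod.swap) := by
        rw [Finset.disjoint_left]
        intro p hp hpi
        obtain ⟨q, hq, hqe⟩ := Finset.mem_image.mp hpi
        have : p.swap ∈ S := by rw [← hqe, Prod.swap_swap]; exact hq
        exact hSswap p hp this
      have hunionsub : S ∪ S.image Prod.swap ⊆ A.offDiag := by
        intro p hp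
        rcases Finset.mem_union.mp hp with h | h
        · obtain ⟨⟨h1, h2, h3⟩, _⟩ := hSmem p |>.mp h
          exact Finset.mem_offDiag.mpr ⟨h1, h2, h3⟩
        · obtain ⟨q, hq, hqe⟩ := Finset.mem_image.mp h
          obtain ⟨⟨h1, h2, h3⟩, _⟩ := hSmem q |>.mp hq
          subst hqe
          exact Finset.mem_offDiag.mpr ⟨h2, h1, Ne.symm h3⟩
      have h2S : 2 * S.card ≤ A.card * A.card - A.card := by
        have hc : S.card + S.card = (S ∪ S.image Prod.swap).card := by
          rw [Finset.card_union_of_disjoint hdisj,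
            Finset.card_image_of_injective _ Prod.swap_injective]
        have := Finset.card_le_card hunionsub
        rw [← hc] at this
        rw [Finset.offDiag_card] at this
        omega
      -- fibers
      have hfiber : S.card = ∑ a ∈ A, (S.filter (fun p => p.1 = a)).card :=
        Finset.card_eq_sum_card_fiberwise (fun p hp => ((hSmem p).mp hp).1.1)
      have hsum : ∑ a ∈ A, 2 * (S.filter (fun p => p.1 = a)).card ≤
          ∑ a ∈ A, (A.card - 1) := by
        rw [← Finset.mul_sum, ← hfiber, Finset.sum_const, smul_eq_mul]
        have : A.card * (A.card - 1) = A.card * A.card - A.card := by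
          rw [Nat.mul_sub, mul_one]
        omega
      obtain ⟨a₀, ha₀A, ha₀⟩ := Finset.exists_le_of_sum_le hAne hsum
      -- card (A ∩ ball a₀) ≤ fiber + 1
      have hfib2 : ((A ∩ dball R (j+1) a₀).erase a₀).card ≤
          (S.filter (fun p => p.1 = a₀)).card := by
        apply Finset.card_le_card_of_injOn (fun a' => (a₀, a'))
        · intro a' ha'
          obtain ⟨hne, ha'm⟩ := Finset.mem_erase.mp ha'
          obtain ⟨ha'A, ha'b⟩ := Finset.mem_inter.mp ha'm
          refine Finset.mem_filter.mpr ⟨(hSmem _).mpr ⟨⟨ha₀A, ha'A, (Ne.symm hne)⟩, ha'b⟩, rfl⟩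
        · intro x _ y _ h
          exact congrArg Prod.snd h
      have ha₀ball : a₀ ∈ A ∩ dball R (j+1) a₀ :=
        Finset.mem_inter.mpr ⟨ha₀A, self_mem_dball⟩
      have hintercard : (A ∩ dball R (j+1) a₀).card ≤
          (S.filter (fun p => p.1 = a₀)).card + 1 := by
        have := Finset.card_erase_of_mem ha₀ball
        omega
      have hsplit : (A \ dball R (j+1) a₀).card + (A ∩ dball R (j+1) a₀).card = A.card :=
        Finset.card_sdiff_add_card_inter A (dball R (j+1) a₀)
      -- the two pieces sit inside the bigger ball
      have hb1 : dball R (j+1) a₀ ⊆ dball R (j+2) v := by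
        intro u hu
        obtain ⟨jj, hjj, hw⟩ := mem_dball.mp hu
        have hstep : RWalk' R 1 a₀ v := ⟨v, mem_inNbrs.mp ha₀A, rfl⟩
        exact mem_dball.mpr ⟨jj + 1, by omega, rwalk_trans hw hstep⟩
      have hb2 : A \ dball R (j+1) a₀ ⊆ dball R (j+2) v := by
        intro u hu
        have huA := (Finset.mem_sdiff.mp hu).1
        exact mem_dball.mpr ⟨1, by omega, v, mem_inNbrs.mp huA, rfl⟩
      have hdisj2 : Disjoint (dball R (j+1) a₀) (A \ dball R (j+1) a₀) :=
        Finset.disjoint_sdiff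
      have hcard2 : (dball R (j+1) a₀).card + (A \ dball R (j+1) a₀).card ≤
          (dball R (j+2) v).card := by
        rw [← Finset.card_union_of_disjoint hdisj2]
        exact Finset.card_le_card (Finset.union_subset hb1 hb2)
      have hih := ih (by omega) a₀
      have hAk : k' + 1 ≤ A.card := by rw [hA]; exact hindeg v
      have hmul : (j+1) * k' = j * k' + k' := by ring
      omega
  -- global counting
  set T := (univ : Finset P).offDiag.filter (fun p => p.2 ∈ dball R (r' + 1) p.1) with hT
  have hTmem : ∀ p : P × P, p ∈ T ↔ p.1 ≠ p.2 ∧ p.2 ∈ dball R (r' + 1) p.1 := by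
    intro p; rw [hT, Finset.mem_filter, Finset.mem_offDiag]
    simp only [Finset.mem_univ, true_and]
  have hTswap : ∀ p : P × P, p ∈ T → p.swap ∉ T := by
    intro p hp hps
    obtain ⟨h3, h4⟩ := (hTmem p).mp hp
    obtain ⟨_, h4'⟩ := (hTmem p.swap).mp hps
    exact hanti (r' + 1) le_rfl p.2 p.1 (Ne.symm h3) h4 h4'
  have hdisj : Disjoint T (T.image Prod.swap) := by
    rw [Finset.disjoint_left]
    intro p hp hpi
    obtain ⟨q, hq, hqe⟩ := Finset.mem_image.mp hpi
    have : p.swap ∈ T := by rw [← hqe, Prod.swap_swap]; exact hq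
    exact hTswap p hp this
  have hunionsub : T ∪ T.image Prod.swap ⊆ (univ : Finset P).offDiag := by
    intro p hp
    rcases Finset.mem_union.mp hp with h | h
    · exact Finset.filter_subset _ _ h
    · obtain ⟨q, hq, hqe⟩ := Finset.mem_image.mp h
      have := ((hTmem q).mp hq).1
      subst hqe
      exact Finset.mem_offDiag.mpr ⟨Finset.mem_univ _, Finset.mem_univ _, Ne.symm this⟩
  have h2T : 2 * T.card ≤ (Fintype.card P) * (Fintype.card P) - (Fintype.card P) := by
    have hc : T.card + T.card = (T ∪ T.image Prod.swap).card := by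
      rw [Finset.card_union_of_disjoint hdisj,
        Finset.card_image_of_injective _ Prod.swap_injective]
    have := Finset.card_le_card hunionsub
    rw [← hc, Finset.offDiag_card, Finset.card_univ, ] at this
    omega
  have hfiber : T.card = ∑ v ∈ (univ : Finset P), (T.filter (fun p => p.1 = v)).card :=
    Finset.card_eq_sum_card_fiberwise (fun p _ => Finset.mem_univ _)
  have hfib2 : ∀ v : P, ((dball R (r' + 1) v).erase v).card ≤ (T.filter (fun p => p.1 = v)).card := by
    intro v
    apply Finset.card_le_card_of_injOn (fun u => (v, u))
    · intro u hu
      obtain ⟨hne, hub⟩ := Finset.mem_erase.mp hu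
      exact Finset.mem_filter.mpr ⟨(hTmem _).mpr ⟨Ne.symm hne, hub⟩, rfl⟩
    · intro x _ y _ h
      exact congrArg Prod.snd h
  have hball : ∀ v : P, 2 * (k' + 2) + r' * k' ≤ 2 * (dball R (r' + 1) v).card :=
    fun v => hgrow r' le_rfl v
  have hlow : (Fintype.card P) * (2 * (k' + 2) + r' * k') ≤ 2 * T.card + 2 * (Fintype.card P) := by
    have h1 : ∀ v : P, 2 * (dball R (r' + 1) v).card ≤ 2 * (T.filter (fun p => p.1 = v)).card + 2 := by
      intro v
      have := hfib2 v
      have hc := Finset.card_erase_of_mem (self_mem_dball (R := R) (i := r' + 1) (v := v))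
      have hpos : 1 ≤ (dball R (r' + 1) v).card := Finset.card_pos.mpr ⟨v, self_mem_dball⟩
      omega
    calc (Fintype.card P) * (2 * (k' + 2) + r' * k')
        = ∑ _v ∈ (univ : Finset P), (2 * (k' + 2) + r' * k') := by
          rw [Finset.sum_const, smul_eq_mul, Finset.card_univ, ]
      _ ≤ ∑ v ∈ (univ : Finset P), 2 * (dball R (r' + 1) v).card := Finset.sum_le_sum (fun v _ => hball v)
      _ ≤ ∑ v ∈ (univ : Finset P), (2 * (T.filter (fun p => p.1 = v)).card + 2) :=
          Finset.sum_le_sum (fun v _ => h1 v)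
      _ = 2 * T.card + 2 * (Fintype.card P) := by
          rw [Finset.sum_add_distrib, ← Finset.mul_sum, ← hfiber, Finset.sum_const,
            smul_eq_mul, Finset.card_univ, ]
          ring
  -- final contradiction
  have hfin : (Fintype.card P) * (2 * (k' + 2) + r' * k') ≤
      (Fintype.card P) * ((Fintype.card P) + 1) := by
    have hh : (Fintype.card P) * ((Fintype.card P) + 1) =
        (Fintype.card P) * (Fintype.card P) + (Fintype.card P) := by ring
    have hNN : Fintype.card P ≤ (Fintype.card P) * (Fintype.card P) :=
      Nat.le_mul_of_pos_left _ hNpos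
    omega
  have hle : 2 * (k' + 2) + r' * k' ≤ (Fintype.card P) + 1 :=
    Nat.le_of_mul_le_mul_left hfin hNpos
  have hr' : (r' + 1 + 1) * k' = r' * k' + 2 * k' := by ring
  omega
set_option linter.unusedSectionVars false in
lemma rwalk_fun {R : P → P → Prop} :
    ∀ {j : ℕ} {u v : P}, RWalk' R j u v →
      ∃ f : ℕ → P, f 0 = u ∧ f j = v ∧ ∀ i < j, R (f i) (f (i+1)) := by
  intro j
  induction j with
  | zero => intro u v h; cases h; exact ⟨fun _ => u, rfl, rfl, by omega⟩
  | succ j ih =>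
    intro u v h
    obtain ⟨w, hw, hwalk⟩ := h
    obtain ⟨f, hf0, hfj, hfe⟩ := ih hwalk
    refine ⟨fun i => match i with | 0 => u | (i'+1) => f i', rfl, hfj, ?_⟩
    intro i hi
    match i with
    | 0 => simpa [hf0] using hw
    | (i'+1) => exact hfe i' (by omega)

/-- a closed walk of length between 1 and m yields an injective cycle -/
lemma cycle_of_closed {R : P → P → Prop} (hirr : ∀ p, ¬ R p p) {m : ℕ} {x : P}
    (hm : 1 ≤ m) (hw : RWalk' R m x x) :
    ∃ s, 2 ≤ s ∧ s ≤ m ∧ ∃ c : ZMod s → P, Function.Injective c ∧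
      ∀ i, R (c i) (c (i + 1)) := by
  classical
  obtain ⟨f, hf0, hfm, hfe⟩ := rwalk_fun hw
  have hPd : ∃ d, 0 < d ∧ ∃ a, a + d ≤ m ∧ f a = f (a + d) :=
    ⟨m, hm, 0, by simpa [hf0, hfm] ⟩
  have hd₀m : Nat.find hPd ≤ m := Nat.find_min' hPd ⟨hm, 0, by simpa [hf0, hfm]⟩
  have hd₀pos : 0 < Nat.find hPd := (Nat.find_spec hPd).1
  obtain ⟨a₀, ha₀m, ha₀⟩ := (Nat.find_spec hPd).2
  have hmin : ∀ d < Nat.find hPd, ¬ (0 < d ∧ ∃ a, a + d ≤ m ∧ f a = f (a + d)) :=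
    fun d hd => Nat.find_min hPd hd
  generalize hgen : Nat.find hPd = d₀ at hd₀m hd₀pos ha₀m ha₀ hmin
  have hs2 : 2 ≤ d₀ := by
    by_contra hcon
    have h1 : d₀ = 1 := by omega
    rw [h1] at ha₀ ha₀m
    have he := hfe a₀ (by omega)
    rw [← ha₀] at he
    exact hirr _ he
  -- injectivity of f on [a₀, a₀ + d₀)
  have hinj : ∀ i < d₀, ∀ i' < d₀, f (a₀ + i) = f (a₀ + i') → i = i' := by
    intro i hi i' hi' hfi
    by_contra hne
    rcases Nat.lt_or_ge i i' with h | h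
    · exact hmin (i' - i) (by omega) ⟨by omega, a₀ + i, by omega,
        by rw [show a₀ + i + (i' - i) = a₀ + i' by omega]; exact hfi⟩
    · have h' : i' < i := by omega
      exact hmin (i - i') (by omega) ⟨by omega, a₀ + i', by omega,
        by rw [show a₀ + i' + (i - i') = a₀ + i by omega]; exact hfi.symm⟩
  haveI : NeZero d₀ := ⟨by omega⟩
  refine ⟨d₀, hs2, hd₀m, fun z => f (a₀ + z.val), ?_, ?_⟩
  · intro z z' hz
    have := hinj z.val (ZMod.val_lt z) z'.val (ZMod.val_lt z') hz
    exact ZMod.val_injective d₀ this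
  · intro i
    haveI : Fact (1 < d₀) := ⟨by omega⟩
    show R (f (a₀ + i.val)) (f (a₀ + (i + 1).val))
    have hval : (i + 1).val = (i.val + 1) % d₀ := by
      rw [ZMod.val_add, ZMod.val_one]
    rcases Nat.lt_or_ge (i.val + 1) d₀ with h | h
    · have : (i + 1).val = i.val + 1 := by rw [hval, Nat.mod_eq_of_lt h]
      rw [this]
      exact hfe (a₀ + i.val) (by omega)
    · have hiv : i.val + 1 = d₀ := by have := ZMod.val_lt i; omega
      have : (i + 1).val = 0 := by rw [hval, hiv, Nat.mod_self]
      rw [this]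
      have h1 : f (a₀ + (0:ℕ)) = f (a₀ + i.val + 1) := by
        rw [show a₀ + i.val + 1 = a₀ + d₀ by omega]
        simpa using ha₀
      rw [h1]
      exact hfe (a₀ + i.val) (by omega)


end Digraph2

set_option maxHeartbeats 1000000 in
/-- If every vertex of a 3-graph `G` on `n > t²/2` vertices lies in at least
`(1/2 + 1/t)·C(n,2)` edges, then `G` contains a degenerate ring of length `s` for
some `2 ≤ s ≤ t`: pairwise distinct pairs `{u_i, v_i}` (indices mod `s`) with
`{u_i, v_i, u_{i+1}}` and `{u_i, v_i, v_{i+1}}` edges for all `i`. -/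
theorem min_degree_ring (t n : ℕ) (ht : 2 ≤ t) (hn : (t : ℝ) ^ 2 / 2 < n)
    (V : Type) [Fintype V] [DecidableEq V] (hcard : Fintype.card V = n)
    (E : Set (Finset V)) (hunif : ∀ e ∈ E, e.card = 3)
    (hdeg : ∀ v : V,
      ((1 : ℝ) / 2 + 1 / t) * (n.choose 2) ≤ ({e | e ∈ E ∧ v ∈ e}.ncard : ℝ)) :
    ∃ s : ℕ, 2 ≤ s ∧ s ≤ t ∧
      ∃ u v : ZMod s → V,
        (∀ i, u i ≠ v i) ∧
        (∀ i j : ZMod s, i ≠ j → ({u i, v i} : Finset V) ≠ ({u j, v j} : Finset V)) ∧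
        (∀ i : ZMod s, ({u i, v i, u (i + 1)} : Finset V) ∈ E ∧
          ({u i, v i, v (i + 1)} : Finset V) ∈ E) := by
  classical
  have htR : (0:ℝ) < t := by positivity
  have ht2R : (2:ℝ) ≤ t := by exact_mod_cast ht
  have hn3 : 3 ≤ n := by
    have h2 : (2:ℝ) < n := by nlinarith
    have : 2 < n := by exact_mod_cast h2
    omega
  have hcardP : Fintype.card {p : Finset V // p.card = 2} = n.choose 2 := by
    simpa [hcard] using Fintype.card_finset_len (α := V) 2
  set P := {p : Finset V // p.card = 2} with hP
  set R : P → P → Prop := fun p q => ∀ x ∈ q.1, insert x p.1 ∈ E with hR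
  have hirr : ∀ p : P, ¬ R p p := by
    intro p hp
    obtain ⟨a, b, hab, hp2⟩ := Finset.card_eq_two.mp p.2
    have ha : a ∈ p.1 := by rw [hp2]; exact mem_insert_self _ _
    have := hunif _ (hp a ha)
    rw [Finset.insert_eq_self.mpr ha] at this
    rw [p.2] at this
    omega
  -- degree finsets
  set D : V → Finset P := fun x => univ.filter (fun p : P => insert x p.1 ∈ E) with hDdef
  have hDcard : ∀ x : V, (D x).card = {e | e ∈ E ∧ x ∈ e}.ncard := by
    intro x
    have hfin : {e | e ∈ E ∧ x ∈ e}.Finite := Set.toFinite _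
    rw [Set.ncard_eq_toFinset_card _ hfin]
    have hnotmem : ∀ p : P, insert x p.1 ∈ E → x ∉ p.1 := by
      intro p hpE hxp
      have := hunif _ hpE
      rw [Finset.insert_eq_self.mpr hxp, p.2] at this
      omega
    apply Finset.card_bij (fun (p : P) _ => insert x p.1)
    · intro p hp
      have hpE : insert x p.1 ∈ E := (Finset.mem_filter.mp hp).2
      rw [Set.Finite.mem_toFinset]
      exact ⟨hpE, mem_insert_self _ _⟩
    · intro p₁ hp₁ p₂ hp₂ heq
      have h1 : insert x p₁.1 ∈ E := (Finset.mem_filter.mp hp₁).2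
      have h2 : insert x p₂.1 ∈ E := (Finset.mem_filter.mp hp₂).2
      apply Subtype.ext
      rw [← Finset.erase_insert (hnotmem p₁ h1), ← Finset.erase_insert (hnotmem p₂ h2), heq]
    · intro e he
      rw [Set.Finite.mem_toFinset] at he
      obtain ⟨heE, hxe⟩ := he
      have hc : (e.erase x).card = 2 := by
        rw [Finset.card_erase_of_mem hxe, hunif e heE]
      refine ⟨⟨e.erase x, hc⟩, Finset.mem_filter.mpr ⟨Finset.mem_univ _, ?_⟩, ?_⟩
      · rw [Finset.insert_erase hxe]; exact heE
      · rw [Finset.insert_erase hxe]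
  have hD : ∀ x : V, ((1 : ℝ) / 2 + 1 / t) * (n.choose 2) ≤ ((D x).card : ℝ) := by
    intro x
    rw [hDcard x]
    exact hdeg x
  -- in-degree lower bound (real)
  have hins : ∀ q : P, 2 * ((n.choose 2 : ℕ) : ℝ) / t ≤ ((inNbrs R q).card : ℝ) := by
    intro q
    obtain ⟨a, b, hab, hq⟩ := Finset.card_eq_two.mp q.2
    have hsub : D a ∩ D b ⊆ inNbrs R q := by
      intro p hp
      obtain ⟨hpa, hpb⟩ := Finset.mem_inter.mp hp
      rw [mem_inNbrs]
      show ∀ x ∈ q.1, insert x p.1 ∈ E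
      intro x hx
      rw [hq] at hx
      rcases Finset.mem_insert.mp hx with h | h
      · subst h; exact (Finset.mem_filter.mp hpa).2
      · rw [Finset.mem_singleton.mp h]; exact (Finset.mem_filter.mp hpb).2
    have hcardle := Finset.card_le_card hsub
    have huniv : (D a ∪ D b).card ≤ n.choose 2 := by
      calc (D a ∪ D b).card ≤ Fintype.card P := Finset.card_le_univ _
        _ = n.choose 2 := hcardP
    have hiu := Finset.card_union_add_card_inter (D a) (D b)
    have h1 : ((D a).card : ℝ) + ((D b).card : ℝ) ≤
        ((n.choose 2 : ℕ) : ℝ) + ((D a ∩ D b).card : ℝ) := by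
      have : (D a).card + (D b).card ≤ n.choose 2 + (D a ∩ D b).card := by omega
      exact_mod_cast this
    have h2 : ((D a ∩ D b).card : ℝ) ≤ ((inNbrs R q).card : ℝ) := by exact_mod_cast hcardle
    have ht0 : (t:ℝ) ≠ 0 := ne_of_gt htR
    have hDa := hD a
    have hDb := hD b
    have hident : ((1:ℝ)/2 + 1/t) * ((n.choose 2 : ℕ) : ℝ) * 2 - ((n.choose 2 : ℕ) : ℝ)
        = 2 * ((n.choose 2 : ℕ) : ℝ) / t := by field_simp; ring
    linarith
  have hPpos : 0 < Fintype.card P := by rw [hcardP]; exact Nat.choose_pos (by omega)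
  haveI hPne : Nonempty P := Fintype.card_pos_iff.mp hPpos
  have hne : (univ : Finset P).Nonempty := univ_nonempty
  set K : ℕ := univ.inf' hne (fun q : P => (inNbrs R q).card) with hKdef
  have hKle : ∀ q : P, K ≤ (inNbrs R q).card := fun q => Finset.inf'_le _ (mem_univ q)
  have hKreal : 2 * ((n.choose 2 : ℕ) : ℝ) / t ≤ (K : ℝ) := by
    obtain ⟨q₀, _, hq₀⟩ := Finset.exists_mem_eq_inf' hne (fun q : P => (inNbrs R q).card)
    rw [hKdef, hq₀]
    exact hins q₀
  have hCpos : 0 < n.choose 2 := Nat.choose_pos (by omega)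
  have hK1 : 1 ≤ K := by
    by_contra h
    have hK0 : K = 0 := by omega
    rw [hK0] at hKreal
    have hpos : (0:ℝ) < 2 * ((n.choose 2 : ℕ) : ℝ) / t := by positivity
    rw [Nat.cast_zero] at hKreal
    linarith
  set r := t / 2 with hrdef
  have hr1 : 1 ≤ r := by omega
  have h2rt : 2 * r ≤ t := by omega
  have htr : t ≤ 2 * r + 1 := by omega
  -- the big numeric inequality
  have hbig : Fintype.card P ≤ (r + 1) * (K - 1) + 2 := by
    rw [hcardP]
    have hC2 : ((n.choose 2 : ℕ) : ℝ) = (n : ℝ) * ((n:ℝ) - 1) / 2 := Nat.cast_choose_two ℝ n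
    have hnt : (t:ℝ) ≤ (n:ℝ) := by nlinarith
    have h2C : (t:ℝ) * ((t:ℝ) - 1) ≤ (n:ℝ) * ((n:ℝ) - 1) := by nlinarith
    have hct : ((t:ℝ) - 1)/2 ≤ ((n.choose 2 : ℕ) : ℝ) / t := by
      rw [div_le_div_iff₀ (by norm_num) htR, hC2]
      nlinarith
    have hKnn : (0:ℝ) ≤ 2 * ((n.choose 2 : ℕ) : ℝ) / t - 1 := by
      have : 2 * ((n.choose 2 : ℕ) : ℝ) / t = 2 * (((n.choose 2 : ℕ) : ℝ) / t) := by ring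
      rw [this]
      linarith
    have hKlow : 2 * ((n.choose 2 : ℕ) : ℝ) / t - 1 ≤ (K:ℝ) - 1 := by linarith
    have hrlow : ((t:ℝ) + 1) / 2 ≤ (r:ℝ) + 1 := by
      have : (t:ℝ) ≤ 2 * (r:ℝ) + 1 := by exact_mod_cast htr
      linarith
    have hmul := mul_le_mul hrlow hKlow hKnn (by linarith)
    have hident : ((t:ℝ)+1)/2 * (2 * ((n.choose 2 : ℕ) : ℝ) / t - 1)
        = ((n.choose 2 : ℕ) : ℝ) + ((n.choose 2 : ℕ) : ℝ)/t - ((t:ℝ)+1)/2 := by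
      field_simp
    have hreal : ((n.choose 2 : ℕ) : ℝ) ≤ ((r:ℝ) + 1) * ((K:ℝ) - 1) + 2 := by
      have hstep : ((n.choose 2 : ℕ) : ℝ) ≤ ((t:ℝ)+1)/2 * (2 * ((n.choose 2 : ℕ) : ℝ) / t - 1) + 2 := by
        rw [hident]
        linarith
      linarith
    have hcast : ((K:ℝ) - 1) = (((K - 1 : ℕ)) : ℝ) := by
      rw [Nat.cast_sub hK1]; norm_num
    rw [hcast] at hreal
    have : ((n.choose 2 : ℕ) : ℝ) ≤ (((r + 1) * (K - 1) + 2 : ℕ) : ℝ) := by push_cast; push_cast at hreal; linarith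
    exact_mod_cast this
  -- reduce to a cycle in the pair digraph
  suffices hPc : ∃ s, 2 ≤ s ∧ s ≤ t ∧ ∃ c : ZMod s → P,
      Function.Injective c ∧ ∀ i, R (c i) (c (i+1)) by
    obtain ⟨s, hs2, hst, c, hcinj, hce⟩ := hPc
    have hpair : ∀ i : ZMod s, ∃ a b : V, a ≠ b ∧ (c i).1 = {a, b} :=
      fun i => Finset.card_eq_two.mp (c i).2
    choose u v huv hpair using hpair
    refine ⟨s, hs2, hst, u, v, huv, ?_, ?_⟩
    · intro i j hij hpq
      apply hij
      apply hcinj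
      apply Subtype.ext
      rw [hpair i, hpair j, hpq]
    · intro i
      have h1 : insert (u (i+1)) (c i).1 ∈ E := by
        apply hce i (u (i+1))
        rw [hpair (i+1)]
        exact mem_insert_self _ _
      have h2 : insert (v (i+1)) (c i).1 ∈ E := by
        apply hce i (v (i+1))
        rw [hpair (i+1)]
        simp
      rw [hpair i] at h1 h2
      constructor
      · have heq : ({u i, v i, u (i + 1)} : Finset V) = insert (u (i+1)) {u i, v i} := by
          ext x; simp; tauto
        rw [heq]; exact h1
      · have heq : ({u i, v i, v (i + 1)} : Finset V) = insert (v (i+1)) {u i, v i} := by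
          ext x; simp; tauto
        rw [heq]; exact h2
  by_contra hPcon
  push_neg at hPcon
  refine digraph_short_cycle R hirr (K - 1) r hr1 (fun q => ?_) hPpos ?_ ?_
  · have := hKle q; omega
  · have : K - 1 + 1 = K := by omega
    exact hbig
  · intro m hm1 hm2 x hw
    obtain ⟨s, hs2, hsm, c, hcinj, hce⟩ := cycle_of_closed hirr hm1 hw
    obtain ⟨i, hi⟩ := hPcon s hs2 (by omega) c hcinj
    exact hi (hce i)
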